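/- Let H be a real inner product space, let u, z ∈ H, let β < 0 be real, let s > 0 and ρ > 0 be real, let J ≥ 0 be real, and let T₁, T₂ be real numbers satisfying T₁ ≥ -(|β|/4)·‖z‖² - (|β|/2)·J² and T₂ ≥ -(|β|/4)·‖u‖² - (|β|/2)·J². Then ‖u‖² + 2β·⟪u, z⟫ - β·‖z‖² + T₁ + T₂ + ρ·(1+β)·J² ≥ (min (min (1 - (9/4)·|β|) (|β|/(4s))) (1 - |β| - |β|/ρ)) · (‖u‖² + s·‖z‖² + ρ·J²). (In the paper, z is the element-wise Riesz representative of the flux functional K∇u·μ so that ‖z‖ equals the H^{-1/2}(∂E) norm of the flux, hence s·‖z‖² is the weighted flux term of |||u|||²; J = ‖[K∇u·n]‖_{L²(Γ_int)}; T₁ = β∫_{Γ_int}⟨z⟩[K∇u·n]ds and T₂ = -β∫_{Γ_int}⟨u⟩[K∇u·n]ds are the interface cross terms; the left-hand side is B(u, û) for û = u + β·z, and the min is the constant ξ₂ of Lemma 3.4.) -/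

import Mathlib

open scoped RealInnerProductSpace

/-- Lemma 3.4 (abstract form): coercivity `B(u, û) ≥ ξ₂ |||u|||²` on the modified
test function `û = u + β • z`, with `β < 0`. -/
theorem coercivity_on_modified_test_function
    {H : Type*} [NormedAddCommGroup H] [InnerProductSpace ℝ H]
    (u z : H) (β s ρ J T₁ T₂ : ℝ)
    (hβ : β < 0) (hs : 0 < s) (hρ : 0 < ρ) (hJ : 0 ≤ J)
    (hT₁ : T₁ ≥ -(|β| / 4) * ‖z‖ ^ 2 - (|β| / 2) * J ^ 2)
    (hT₂ : T₂ ≥ -(|β| / 4) * ‖u‖ ^ 2 - (|β| / 2) * J ^ 2) :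
    ‖u‖ ^ 2 + 2 * β * ⟪u, z⟫ - β * ‖z‖ ^ 2 + T₁ + T₂ + ρ * (1 + β) * J ^ 2 ≥
      (min (min (1 - (9 / 4) * |β|) (|β| / (4 * s))) (1 - |β| - |β| / ρ)) *
        (‖u‖ ^ 2 + s * ‖z‖ ^ 2 + ρ * J ^ 2) := by
  set b := |β| with hbdef
  have hb : b = -β := abs_of_neg hβ
  have hb0 : 0 < b := by rw [hb]; linarith
  set m := min (min (1 - (9 / 4) * b) (b / (4 * s))) (1 - b - b / ρ) with hm
  have hm1 : m ≤ 1 - (9 / 4) * b := le_trans (min_le_left _ _) (min_le_left _ _)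
  have hm2 : m ≤ b / (4 * s) := le_trans (min_le_left _ _) (min_le_right _ _)
  have hm3 : m ≤ 1 - b - b / ρ := min_le_right _ _
  have hm2' : m * s ≤ b / 4 := by
    have := mul_le_mul_of_nonneg_right hm2 hs.le
    have hss : b / (4 * s) * s = b / 4 := by field_simp
    linarith [this.trans_eq hss]
  have hm3' : m * ρ ≤ ρ - b * ρ - b := by
    have := mul_le_mul_of_nonneg_right hm3 hρ.le
    have hrr : (1 - b - b / ρ) * ρ = ρ - b * ρ - b := by field_simp
    linarith [this.trans_eq hrr]
  -- Cauchy–Schwarz + Young: 2β⟪u,z⟫ ≥ -2b‖u‖² - (b/2)‖z‖²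
  have hcs : ⟪u, z⟫ ≤ ‖u‖ * ‖z‖ := real_inner_le_norm u z
  have hcross : 2 * β * ⟪u, z⟫ ≥ -2 * b * ‖u‖ ^ 2 - b / 2 * ‖z‖ ^ 2 := by
    have hy : 2 * ‖u‖ * ‖z‖ ≤ 2 * ‖u‖ ^ 2 + ‖z‖ ^ 2 / 2 := by
      nlinarith [sq_nonneg (2 * ‖u‖ - ‖z‖)]
    have : -(2 * β) * ⟪u, z⟫ ≤ -(2 * β) * (‖u‖ * ‖z‖) :=
      mul_le_mul_of_nonneg_left hcs (by linarith)
    nlinarith [this]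
  -- coefficient-wise comparison
  have h1 : m * ‖u‖ ^ 2 ≤ (1 - 9 / 4 * b) * ‖u‖ ^ 2 :=
    mul_le_mul_of_nonneg_right hm1 (sq_nonneg _)
  have h2 : (m * s) * ‖z‖ ^ 2 ≤ (b / 4) * ‖z‖ ^ 2 :=
    mul_le_mul_of_nonneg_right hm2' (sq_nonneg _)
  have h3 : (m * ρ) * J ^ 2 ≤ (ρ - b * ρ - b) * J ^ 2 :=
    mul_le_mul_of_nonneg_right hm3' (sq_nonneg _)
  have e1 : -β * ‖z‖ ^ 2 = b * ‖z‖ ^ 2 := by rw [hb]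
  have e2 : ρ * (1 + β) * J ^ 2 = (ρ - ρ * b) * J ^ 2 := by rw [hb]; ring
  nlinarith [h1, h2, h3, hcross, hT₁, hT₂, sq_nonneg J, e1, e2]
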